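/- Let R_1, …, R_m be globally consistent bags over finite attribute sets X_1, …, X_m, and let W be a minimal witness to their global consistency, i.e., there is no witness U of their global consistency whose support is a proper subset of the support of W. Then |Supp(W)| ≤ Σ_{i=1}^m Σ_{r ∈ Supp(R_i)} log₂(R_i(r) + 1). -/

import Mathlib

variable {A : Type} [DecidableEq A]

/-- The type of `X`-tuples: functions assigning to each attribute `a ∈ X` an element
of its domain `D a`. -/
def Tup (D : A → Type) (X : Finset A) : Type := ∀ a : X, D a.1

/-- Restriction (projection) of an `X`-tuple to `Z ⊆ X`. -/
def Tup.restrict {D : A → Type} {X Z : Finset A} (h : Z ⊆ X) (t : Tup D X) : Tup D Z :=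
  fun a => t ⟨a.1, h a.2⟩

/-- A bag over `X`: a finitely supported function from `X`-tuples to ℕ. -/
abbrev Bag (D : A → Type) (X : Finset A) : Type := Tup D X →₀ ℕ

/-- The marginal of a bag on `Z ⊆ X`. -/
noncomputable def Bag.marginal {D : A → Type} {X Z : Finset A} (h : Z ⊆ X) (R : Bag D X) :
    Bag D Z := Finsupp.mapDomain (Tup.restrict h) R

/-- Two bags are consistent if a common bag over the union of schemas has them as marginals. -/
def Consistent {D : A → Type} {X Y : Finset A} (R : Bag D X) (S : Bag D Y) : Prop :=
  ∃ T : Bag D (X ∪ Y),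
    Bag.marginal Finset.subset_union_left T = R ∧
    Bag.marginal Finset.subset_union_right T = S

/-- `W` witnesses the global consistency of the family `R`. -/
def IsWitness {D : A → Type} {m : ℕ} (X : Fin m → Finset A) (R : ∀ i, Bag D (X i))
    (W : Bag D (Finset.univ.sup X)) : Prop :=
  ∀ i, Bag.marginal (Finset.le_sup (Finset.mem_univ i)) W = R i

-- auxiliary lemmas

lemma marg_mono {D : A → Type} {X Z : Finset A} (h : Z ⊆ X) {f g : Bag D X} (hfg : f ≤ g) :
    Bag.marginal h f ≤ Bag.marginal h g := by
  obtain ⟨c, rfl⟩ := le_iff_exists_add.mp hfg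
  simp only [Bag.marginal, Finsupp.mapDomain_add]
  exact le_add_of_nonneg_right zero_le

lemma filter_split {α : Type*} [DecidableEq α] (f : α →₀ ℕ) (T T' : Finset α) :
    f.filter (· ∈ T) = f.filter (· ∈ T ∩ T') + f.filter (· ∈ T \ T') := by
  ext x
  simp only [Finsupp.add_apply, Finsupp.filter_apply, Finset.mem_inter, Finset.mem_sdiff]
  by_cases h1 : x ∈ T <;> by_cases h2 : x ∈ T' <;> simp [h1, h2]

lemma aux_min {D : A → Type} {m : ℕ} (X : Fin (m + 1) → Finset A)
    [DecidableEq (Tup D (Finset.univ.sup X))]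
    (R : ∀ i, Bag D (X i)) (W : Bag D (Finset.univ.sup X)) (hW : IsWitness X R W)
    (hmin : ∀ U : Bag D (Finset.univ.sup X), IsWitness X R U → ¬ U.support ⊂ W.support)
    (S S' : Finset (Tup D (Finset.univ.sup X)))
    (hS : S ⊆ W.support) (hdisj : ∀ x ∈ S, x ∉ S')
    (hmarg : ∀ i, Bag.marginal (Finset.le_sup (Finset.mem_univ i)) (W.filter (· ∈ S)) =
      Bag.marginal (Finset.le_sup (Finset.mem_univ i)) (W.filter (· ∈ S')))
    (hne : S.Nonempty) : False := by
  classical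
  set U : Bag D (Finset.univ.sup X) := W.filter (fun x => ¬ x ∈ S) + W.filter (· ∈ S') with hU
  have hUW : IsWitness X R U := by
    intro i
    have h1 : Bag.marginal (Finset.le_sup (Finset.mem_univ i)) U =
        Bag.marginal (Finset.le_sup (Finset.mem_univ i)) (W.filter (fun x => ¬ x ∈ S)) +
        Bag.marginal (Finset.le_sup (Finset.mem_univ i)) (W.filter (· ∈ S)) := by
      have h2 := hmarg i
      simp only [Bag.marginal] at h2 ⊢
      rw [hU, Finsupp.mapDomain_add, h2]
    simp only [Bag.marginal] at h1 ⊢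
    rw [h1, ← hW i, Bag.marginal, ← Finsupp.mapDomain_add]
    congr 1
    ext x
    simp only [Finsupp.add_apply, Finsupp.filter_apply]
    by_cases h : x ∈ S <;> simp [h]
  refine hmin U hUW ?_
  constructor
  · intro x hx
    have := Finsupp.support_add hx
    simp only [Finset.mem_union, Finsupp.support_filter, Finset.mem_filter] at this
    rcases this with h | h
    · exact h.1
    · exact h.1
  · intro hsub
    obtain ⟨x, hx⟩ := hne
    have hxW : x ∈ W.support := hS hx
    have hxU : x ∉ U.support := by
      simp only [hU, Finsupp.mem_support_iff, Finsupp.add_apply, Finsupp.filter_apply, not_not,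
        ne_eq]
      simp [hx, hdisj x hx]
    exact hxU (hsub hxW)

/-- if `W` is a *minimal* witness to the global consistency of the bags
`R 0, …, R m` (no witness has support properly contained in that of `W`), then the support
size of `W` is at most the sum of the binary sizes `Σ_r log₂(R i r + 1)` of the `R i`. -/
theorem stmt15 {D : A → Type} {m : ℕ} (X : Fin (m + 1) → Finset A)
    (R : ∀ i, Bag D (X i))
    (W : Bag D (Finset.univ.sup X)) (hW : IsWitness X R W)
    (hmin : ∀ U : Bag D (Finset.univ.sup X), IsWitness X R U → ¬ U.support ⊂ W.support) :
    (W.support.card : ℝ) ≤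
      ∑ i, ∑ r ∈ (R i).support, Real.logb 2 ((R i r : ℝ) + 1) := by
  classical
  -- the injection
  set F : Finset (Tup D (Finset.univ.sup X)) → ∀ i, Bag D (X i) :=
    fun T i => Bag.marginal (Finset.le_sup (Finset.mem_univ i)) (W.filter (· ∈ T)) with hF
  have hinj : ∀ T ∈ W.support.powerset, ∀ T' ∈ W.support.powerset, F T = F T' → T = T' := by
    intro T hT T' hT' hFeq
    rw [Finset.mem_powerset] at hT hT'
    by_contra hne
    -- marginals of the difference parts agree
    have hmarg : ∀ i, Bag.marginal (Finset.le_sup (Finset.mem_univ i)) (W.filter (· ∈ T \ T')) =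
        Bag.marginal (Finset.le_sup (Finset.mem_univ i)) (W.filter (· ∈ T' \ T)) := by
      intro i
      have e1 : F T i = F T' i := congrFun hFeq i
      rw [hF] at e1
      simp only at e1
      rw [filter_split W T T', filter_split W T' T, Finset.inter_comm T' T] at e1
      simp only [Bag.marginal, Finsupp.mapDomain_add] at e1
      ext z
      have := DFunLike.congr_fun e1 z
      simp only [Finsupp.add_apply] at this
      simp only [Bag.marginal]
      omega
    rcases Finset.eq_empty_or_nonempty (T \ T') with he | hne'
    · have hne'' : (T' \ T).Nonempty := by
        rw [Finset.sdiff_eq_empty_iff_subset] at he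
        rcases Finset.eq_empty_or_nonempty (T' \ T) with he2 | h2
        · rw [Finset.sdiff_eq_empty_iff_subset] at he2
          exact absurd (Finset.Subset.antisymm he he2) hne
        · exact h2
      exact aux_min X R W hW hmin (T' \ T) (T \ T')
        (fun x hx => hT' (Finset.mem_sdiff.mp hx).1)
        (fun x hx hx' => (Finset.mem_sdiff.mp hx').2 (Finset.mem_sdiff.mp hx).1)
        (fun i => (hmarg i).symm) hne''
    · exact aux_min X R W hW hmin (T \ T') (T' \ T)
        (fun x hx => hT (Finset.mem_sdiff.mp hx).1)
        (fun x hx hx' => (Finset.mem_sdiff.mp hx').2 (Finset.mem_sdiff.mp hx).1)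
        hmarg hne'
  -- the image lands in the sub-bags
  have hmaps : ∀ T ∈ W.support.powerset, F T ∈ Fintype.piFinset (fun i => Finset.Iic (R i)) := by
    intro T _
    rw [Fintype.mem_piFinset]
    intro i
    rw [Finset.mem_Iic, ← hW i]
    refine marg_mono _ ?_
    intro x
    rw [Finsupp.filter_apply]
    split <;> simp
  have hcard : 2 ^ W.support.card ≤ ∏ i, ∏ r ∈ (R i).support, (R i r + 1) := by
    calc 2 ^ W.support.card = (W.support.powerset).card := (Finset.card_powerset _).symm
    _ ≤ (Fintype.piFinset (fun i => Finset.Iic (R i))).card :=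
        Finset.card_le_card_of_injOn F hmaps hinj
    _ = ∏ i, (Finset.Iic (R i)).card := Fintype.card_piFinset _
    _ = ∏ i, ∏ r ∈ (R i).support, (R i r + 1) := by
        refine Finset.prod_congr rfl fun i _ => ?_
        rw [Finsupp.card_Iic]
        exact Finset.prod_congr rfl fun r _ => Nat.card_Iic _
  -- pass to real logarithms
  have h2 : (2 : ℝ) ^ W.support.card ≤
      ((∏ i, ∏ r ∈ (R i).support, (R i r + 1) : ℕ) : ℝ) := by exact_mod_cast hcard
  have hpos : (0 : ℝ) < (2 : ℝ) ^ W.support.card := by positivity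
  have hlog := Real.logb_le_logb_of_le (b := 2) one_lt_two hpos h2
  have hL : Real.logb 2 ((2 : ℝ) ^ W.support.card) = W.support.card := by
    rw [Real.logb_pow, Real.logb_self_eq_one one_lt_two]
    ring
  rw [hL] at hlog
  refine hlog.trans (le_of_eq ?_)
  push_cast
  rw [Real.logb_prod]
  · refine Finset.sum_congr rfl fun i _ => ?_
    rw [Real.logb_prod]
    intro r _
    positivity
  · intro i _
    have : (0:ℝ) < ∏ r ∈ (R i).support, ((R i r : ℝ) + 1) := by positivity
    exact ne_of_gt this
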